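/- Let Γ be an alphabet, # a letter not in Γ, k ∈ ℕ, and let u₁,…,u_k, w be words over Γ. Then the language L = { x₀·#·x₁·#·⋯·#·x_k : x₀,…,x_k ∈ Γ* and x₀·u₁·x₁·u₂·x₂ ⋯ u_k·x_k = w } over the alphabet Γ ∪ {#} is regular; moreover it is recognized by a deterministic finite automaton with at most (k+1)·(|w|+1) states. -/

import Mathlib

/-- A deterministic finite automaton with a partial transition function. -/
structure PartialDFA (α : Type*) (σ : Type*) where
  step : σ → α → Option σ
  start : σ
  accept : Set σ

namespace PartialDFA

/-- Evaluation of a partial DFA from an optional state (`none` meaning "stuck"). -/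
def evalFrom {α σ : Type*} (M : PartialDFA α σ) : Option σ → List α → Option σ
  | s, [] => s
  | s, a :: as => M.evalFrom (s.bind fun q => M.step q a) as

/-- The language accepted by a partial DFA. -/
def accepts {α σ : Type*} (M : PartialDFA α σ) : Set (List α) :=
  { w | ∃ q ∈ M.accept, M.evalFrom (some M.start) w = some q }

end PartialDFA

/-- The word `x₀·#·x₁·#·⋯·#·x_k` over the alphabet `Option Γ`, where the separator `#`
is the letter `none` and letters of `Γ` are embedded via `some`. -/
def hashJoin {Γ : Type*} {k : ℕ} (x : Fin (k + 1) → List Γ) : List (Option Γ) :=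
  (x 0).map some ++ (List.finRange k).flatMap fun j => none :: (x j.succ).map some

/-- The solution language `{ x₀·#·x₁·#·⋯·#·x_k : x₀·u₁·x₁·u₂·x₂ ⋯ u_k·x_k = w }` of the
sequential word equation given by the constants `u₁,…,u_k` (here `u 0, …, u (k-1)`)
and `w`. -/
def eqnSolutions {Γ : Type*} {k : ℕ} (u : Fin k → List Γ) (w : List Γ) :
    Set (List (Option Γ)) :=
  { s | ∃ x : Fin (k + 1) → List Γ, s = hashJoin x ∧
      x 0 ++ (List.finRange k).flatMap (fun j => u j ++ x j.succ) = w }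

namespace EqnAux

variable {Γ : Type}

/-- Recursive description of the solution language. -/
def Sol : List (List Γ) → List Γ → Set (List (Option Γ))
  | [], v => { s | s = v.map some }
  | u0 :: us, v => { s | ∃ y s', s = y.map some ++ none :: s' ∧
      ∃ v', v = y ++ u0 ++ v' ∧ s' ∈ Sol us v' }

lemma hashJoin_zero (x : Fin 1 → List Γ) : hashJoin x = (x 0).map some := by
  simp [hashJoin]

lemma hashJoin_succ {m : ℕ} (x : Fin (m + 2) → List Γ) :
    hashJoin x = (x 0).map some ++ none :: hashJoin (fun j => x j.succ) := by
  simp [hashJoin, List.finRange_succ, List.flatMap_cons, List.flatMap_map, Fin.succ_zero_eq_one]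

lemma eqnSolutions_eq_sol : ∀ (k : ℕ) (u : Fin k → List Γ) (w : List Γ),
    eqnSolutions u w = Sol (List.ofFn u) w := by
  intro k
  induction k with
  | zero =>
    intro u w
    ext s
    simp only [eqnSolutions, Sol, List.ofFn_zero, Set.mem_setOf_eq]
    constructor
    · rintro ⟨x, rfl, hx⟩
      simp only [List.finRange_zero, List.flatMap_nil, List.append_nil] at hx
      rw [hashJoin_zero, hx]
    · rintro rfl
      exact ⟨fun _ => w, by rw [hashJoin_zero], by simp⟩
  | succ m ih =>
    intro u w
    ext s
    simp only [eqnSolutions, Set.mem_setOf_eq, List.ofFn_succ, Sol]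
    constructor
    · rintro ⟨x, rfl, hx⟩
      refine ⟨x 0, hashJoin (fun j => x j.succ), (hashJoin_succ x).symm ▸ rfl, ?_⟩
      rw [List.finRange_succ, List.flatMap_cons, List.flatMap_map] at hx
      refine ⟨(x 1) ++ (List.finRange m).flatMap (fun j => u j.succ ++ x j.succ.succ), ?_, ?_⟩
      · simpa using hx.symm
      · rw [← ih]
        refine ⟨fun j => x j.succ, rfl, ?_⟩
        simp [Fin.succ_zero_eq_one]
    · rintro ⟨y, s', rfl, v', hv, hs'⟩
      rw [← ih] at hs'
      obtain ⟨x', rfl, hx'⟩ := hs'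
      refine ⟨Fin.cases y x', ?_, ?_⟩
      · rw [hashJoin_succ]
        simp [Fin.cases_succ]
      · rw [List.finRange_succ, List.flatMap_cons, List.flatMap_map]
        simp only [Fin.cases_succ, Fin.cases_zero, Fin.succ_zero_eq_one]
        rw [hv, ← hx']
        rw [← Fin.succ_zero_eq_one, Fin.cases_succ]
        simp

variable {k : ℕ} (u : Fin k → List Γ) (w : List Γ)

/-- total reindexing of `u` -/
def u' (i : ℕ) : List Γ := (List.ofFn u).getD i []

lemma u'_eq {i : ℕ} (h : i < k) : u' u i = u ⟨i, h⟩ := by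
  simp [u', List.getD_eq_getElem?_getD, List.getElem?_eq_getElem (by simpa using h : i < (List.ofFn u).length)]

open Classical in
/-- the recognizing partial DFA -/
noncomputable def M : PartialDFA (Option Γ) (Fin (k + 1) × Fin (w.length + 1)) where
  step := fun q a =>
    match a with
    | some c =>
        if w[(q.2 : ℕ)]? = some c then
          some (q.1, ⟨min ((q.2 : ℕ) + 1) w.length, by omega⟩)
        else none
    | none =>
        if (q.1 : ℕ) < k ∧ u' u (q.1 : ℕ) <+: w.drop (q.2 : ℕ) then
          some (⟨min ((q.1 : ℕ) + 1) k, by omega⟩,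
                ⟨min ((q.2 : ℕ) + (u' u (q.1 : ℕ)).length) w.length, by omega⟩)
        else none
  start := (0, 0)
  accept := {(⟨k, lt_add_one k⟩, ⟨w.length, lt_add_one _⟩)}

lemma evalFrom_none (s : List (Option Γ)) : (M u w).evalFrom none s = none := by
  induction s with
  | nil => rfl
  | cons a s ih => simpa [PartialDFA.evalFrom] using ih

lemma eval_map_some (y : List Γ) :
    ∀ (i : Fin (k + 1)) (p : Fin (w.length + 1)) (rest : List (Option Γ))
      (q : Fin (w.length + 1)),
    y <+: w.drop (p : ℕ) → (q : ℕ) = (p : ℕ) + y.length →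
    (M u w).evalFrom (some (i, p)) (y.map some ++ rest) =
      (M u w).evalFrom (some (i, q)) rest := by
  induction y with
  | nil =>
    intro i p rest q _ hq
    have : q = p := Fin.ext (by simpa using hq)
    simp [this]
  | cons c y ih =>
    intro i p rest q hpre hq
    have hc : w[(p : ℕ)]? = some c := by
      have h0 : (w.drop (p : ℕ))[0]? = some c := by
        obtain ⟨t, ht⟩ := hpre
        rw [← ht]; simp
      rwa [List.getElem?_drop, Nat.add_zero] at h0
    have hplt : (p : ℕ) < w.length := (List.getElem?_eq_some_iff.mp hc).1
    have hstep : ((M u w).step (i, p) (some c)) =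
        some (i, ⟨min ((p : ℕ) + 1) w.length, by omega⟩) := by
      simp [M, hc]
    have hpre' : y <+: w.drop ((p : ℕ) + 1) := by
      obtain ⟨t, ht⟩ := hpre
      refine ⟨t, ?_⟩
      have hd := List.drop_eq_getElem_cons hplt (l := w)
      rw [hd] at ht
      have hcy : w[(p:ℕ)] = c := (List.getElem?_eq_some_iff.mp hc).2
      simpa [hcy] using ht
    have hmin : min ((p : ℕ) + 1) w.length = (p : ℕ) + 1 := by omega
    rw [List.map_cons, List.cons_append]
    show (M u w).evalFrom ((M u w).step (i, p) (some c)) (y.map some ++ rest) = _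
    rw [hstep]
    exact ih i ⟨min ((p : ℕ) + 1) w.length, by omega⟩ rest q
      (by simpa [hmin] using hpre') (by simp [hmin] at hq ⊢; omega)

lemma sol_cons (us : List (List Γ)) (c : Γ) (v' : List Γ) (s : List (Option Γ))
    (hs : s ∈ Sol us v') : some c :: s ∈ Sol us (c :: v') := by
  cases us with
  | nil =>
    simp only [Sol, Set.mem_setOf_eq] at hs ⊢
    rw [hs]; simp
  | cons u0 us =>
    obtain ⟨y, s', rfl, v'', hv, h⟩ := hs
    exact ⟨c :: y, s', by simp, v'', by simp [hv], h⟩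

lemma eval_sol : ∀ (m : ℕ) (i : Fin (k + 1)) (p : Fin (w.length + 1)) (s : List (Option Γ)),
    (i : ℕ) + m = k →
    s ∈ Sol ((List.ofFn u).drop (i : ℕ)) (w.drop (p : ℕ)) →
    (M u w).evalFrom (some (i, p)) s
      = some (⟨k, lt_add_one k⟩, ⟨w.length, lt_add_one _⟩) := by
  intro m
  induction m with
  | zero =>
    intro i p s hi hs
    have hik : (i : ℕ) = k := by omega
    rw [List.drop_eq_nil_of_le (by simp [hik])] at hs
    simp only [Sol, Set.mem_setOf_eq] at hs
    subst hs
    rw [show (w.drop (p : ℕ)).map some = (w.drop (p : ℕ)).map some ++ [] by simp]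
    rw [eval_map_some u w (w.drop (p : ℕ)) i p [] ⟨w.length, lt_add_one _⟩
      (List.prefix_refl _) (by simp; omega)]
    simp only [PartialDFA.evalFrom]
    congr 1
    exact Prod.ext (Fin.ext (by simpa using hik)) rfl
  | succ m ihm =>
    intro i p s hi hs
    have hik : (i : ℕ) < k := by omega
    have hlen : (i : ℕ) < (List.ofFn u).length := by simpa using hik
    rw [List.drop_eq_getElem_cons hlen, List.getElem_ofFn] at hs
    obtain ⟨y, s', rfl, v', hv, hs'⟩ := hs
    have hyp : y <+: w.drop (p : ℕ) := ⟨u ⟨(i:ℕ), hik⟩ ++ v', by rw [hv]; simp⟩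
    have hyle : y.length ≤ w.length - (p : ℕ) := by
      have := hyp.length_le; simpa using this
    set p1 : Fin (w.length + 1) := ⟨(p : ℕ) + y.length, by omega⟩ with hp1
    rw [eval_map_some u w y i p (none :: s') p1 hyp rfl]
    have hdrop1 : w.drop (p1 : ℕ) = u ⟨(i:ℕ), hik⟩ ++ v' := by
      have hdd : w.drop ((p : ℕ) + y.length) = (w.drop (p : ℕ)).drop y.length :=
        (List.drop_drop).symm
      rw [hp1]; simp only [hdd, hv]
      simp
    have hcond : (i : ℕ) < k ∧ u' u (i : ℕ) <+: w.drop (p1 : ℕ) := by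
      refine ⟨hik, ?_⟩
      rw [u'_eq u hik, hdrop1]
      exact ⟨v', rfl⟩
    have hul : (u' u (i : ℕ)).length ≤ w.length - (p1 : ℕ) := by
      have := hcond.2.length_le; simpa using this
    have hstep : (M u w).step (i, p1) none =
        some (⟨min ((i : ℕ) + 1) k, by omega⟩,
              ⟨min ((p1 : ℕ) + (u' u (i : ℕ)).length) w.length, by omega⟩) := by
      simp only [M]
      rw [if_pos hcond]
    show (M u w).evalFrom ((M u w).step (i, p1) none) s' = _
    rw [hstep]
    have hmini : min ((i : ℕ) + 1) k = (i : ℕ) + 1 := by omega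
    have hminp : min ((p1 : ℕ) + (u' u (i : ℕ)).length) w.length
        = (p1 : ℕ) + (u' u (i : ℕ)).length := by omega
    apply ihm ⟨min ((i : ℕ) + 1) k, by omega⟩ _ s' (by simp [hmini]; omega)
    have hdrop2 : w.drop (min ((p1 : ℕ) + (u' u (i : ℕ)).length) w.length) = v' := by
      rw [hminp, ← List.drop_drop, hdrop1, u'_eq u hik]
      simp
    rw [hdrop2]
    have hdfn : (List.ofFn u).drop (min ((i : ℕ) + 1) k) = (List.ofFn u).drop ((i:ℕ) + 1) := by
      rw [hmini]
    rw [hdfn]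
    exact hs'

lemma sol_of_eval : ∀ (s : List (Option Γ)) (i : Fin (k + 1)) (p : Fin (w.length + 1)),
    (M u w).evalFrom (some (i, p)) s
      = some (⟨k, lt_add_one k⟩, ⟨w.length, lt_add_one _⟩) →
    s ∈ Sol ((List.ofFn u).drop (i : ℕ)) (w.drop (p : ℕ)) := by
  intro s
  induction s with
  | nil =>
    intro i p h
    simp only [PartialDFA.evalFrom, Option.some_inj, Prod.mk.injEq] at h
    obtain ⟨hi, hp⟩ := h
    have hi' : (i : ℕ) = k := by rw [hi]
    have hp' : (p : ℕ) = w.length := by rw [hp]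
    rw [List.drop_eq_nil_of_le (by simp [hi']), List.drop_eq_nil_of_le (by omega)]
    simp [Sol]
  | cons a s ih =>
    intro i p h
    replace h : (M u w).evalFrom ((M u w).step (i, p) a) s
        = some (⟨k, lt_add_one k⟩, ⟨w.length, lt_add_one _⟩) := h
    cases a with
    | some c =>
      by_cases hc : w[(p : ℕ)]? = some c
      · have hplt : (p : ℕ) < w.length := (List.getElem?_eq_some_iff.mp hc).1
        have hstep : (M u w).step (i, p) (some c)
            = some (i, ⟨min ((p : ℕ) + 1) w.length, by omega⟩) := by simp [M, hc]
        rw [hstep] at h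
        have hmin : min ((p : ℕ) + 1) w.length = (p : ℕ) + 1 := by omega
        have := ih i ⟨min ((p : ℕ) + 1) w.length, by omega⟩ h
        simp only [hmin] at this
        have hw : w.drop (p : ℕ) = c :: w.drop ((p : ℕ) + 1) := by
          rw [List.drop_eq_getElem_cons hplt, (List.getElem?_eq_some_iff.mp hc).2]
        rw [hw]
        exact sol_cons _ _ _ _ this
      · have hstep : (M u w).step (i, p) (some c) = none := by simp [M, hc]
        rw [hstep, evalFrom_none] at h
        exact absurd h (by simp)
    | none =>
      by_cases hcond : (i : ℕ) < k ∧ u' u (i : ℕ) <+: w.drop (p : ℕ)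
      · obtain ⟨hik, hpre⟩ := hcond
        have hul : (u' u (i : ℕ)).length ≤ w.length - (p : ℕ) := by
          have := hpre.length_le; simpa using this
        have hstep : (M u w).step (i, p) none =
            some (⟨min ((i : ℕ) + 1) k, by omega⟩,
                  ⟨min ((p : ℕ) + (u' u (i : ℕ)).length) w.length, by omega⟩) := by
          simp only [M]
          rw [if_pos ⟨hik, hpre⟩]
        rw [hstep] at h
        have hmini : min ((i : ℕ) + 1) k = (i : ℕ) + 1 := by omega
        have hminp : min ((p : ℕ) + (u' u (i : ℕ)).length) w.length
            = (p : ℕ) + (u' u (i : ℕ)).length := by omega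
        have hrec := ih _ _ h
        simp only [hmini, hminp] at hrec
        have hlen : (i : ℕ) < (List.ofFn u).length := by simpa using hik
        rw [List.drop_eq_getElem_cons hlen, List.getElem_ofFn]
        have hdropw : w.drop (p : ℕ)
            = u' u (i : ℕ) ++ w.drop ((p : ℕ) + (u' u (i : ℕ)).length) := by
          conv_lhs => rw [← List.prefix_iff_eq_append.mp hpre]
          congr 1
          exact List.drop_drop
        refine ⟨[], s, by simp, w.drop ((p : ℕ) + (u' u (i : ℕ)).length), ?_, ?_⟩
        · rw [hdropw, u'_eq u hik]; simp
        · exact hrec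
      · have hstep : (M u w).step (i, p) none = none := by
          simp only [M]
          rw [if_neg hcond]
        rw [hstep, evalFrom_none] at h
        exact absurd h (by simp)

lemma accepts_M : (M u w).accepts = Sol (List.ofFn u) w := by
  ext s
  constructor
  · rintro ⟨q, hq, he⟩
    have hq' : q = (⟨k, lt_add_one k⟩, ⟨w.length, lt_add_one _⟩) := hq
    subst hq'
    have := sol_of_eval u w s 0 0 he
    simpa using this
  · intro hs
    refine ⟨(⟨k, lt_add_one k⟩, ⟨w.length, lt_add_one _⟩), rfl, ?_⟩
    exact eval_sol u w k 0 0 s (by simp) (by simpa using hs)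

def toDFA {α σ : Type*} (N : PartialDFA α σ) : DFA α (Option σ) where
  step q a := q.bind fun s => N.step s a
  start := some N.start
  accept := {o | ∃ q ∈ N.accept, o = some q}

lemma toDFA_eval {α σ : Type*} (N : PartialDFA α σ) :
    ∀ (s : List α) (o : Option σ), (toDFA N).evalFrom o s = N.evalFrom o s := by
  intro s
  induction s with
  | nil => intro o; rfl
  | cons a s ihs =>
    intro o
    show (toDFA N).evalFrom ((toDFA N).step o a) s = _
    exact ihs _

lemma toDFA_accepts {α σ : Type*} (N : PartialDFA α σ) :
    (toDFA N).accepts = N.accepts := by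
  ext s
  rw [DFA.mem_accepts]
  show (toDFA N).evalFrom (some N.start) s ∈ (toDFA N).accept ↔ _
  rw [toDFA_eval]
  constructor
  · rintro ⟨q, hq, he⟩; exact ⟨q, hq, he⟩
  · rintro ⟨q, hq, he⟩; exact ⟨q, hq, he⟩

end EqnAux

/-- The solution language of a sequential word equation is regular; moreover it is
recognized by a (partial) deterministic finite automaton with at most
`(k+1)·(|w|+1)` states. -/
theorem eqnSolutions_regular {Γ : Type} (k : ℕ) (u : Fin k → List Γ) (w : List Γ) :
    Language.IsRegular (eqnSolutions u w) ∧
    ∃ (σ : Type) (_ : Fintype σ) (M : PartialDFA (Option Γ) σ),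
      Fintype.card σ ≤ (k + 1) * (w.length + 1) ∧ M.accepts = eqnSolutions u w := by
  have hacc : (EqnAux.M u w).accepts = eqnSolutions u w := by
    rw [EqnAux.accepts_M, EqnAux.eqnSolutions_eq_sol]
  constructor
  · exact ⟨Option (Fin (k + 1) × Fin (w.length + 1)), inferInstance,
      EqnAux.toDFA (EqnAux.M u w), by rw [EqnAux.toDFA_accepts, hacc]⟩
  · exact ⟨Fin (k + 1) × Fin (w.length + 1), inferInstance, EqnAux.M u w,
      by simp, hacc⟩
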